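/- If A is a local Prüfer ring, a ∈ A is regular and x ∈ A is such that the ideal (a, x) is regular, then (a) and (x) are comparable; in particular if x is a non-unit multiple of a relation holds x = ak with k non-unit, and then a + x = (1+k)a is regular. -/

import Mathlib

variable {A B : Type*} [CommRing A] [CommRing B]

/-- The amalgamation `A ⋈^f J` of `A` and `B` along the ideal `J` with respect to `f`,
as a subring of `A × B`. -/
def amalg (f : A →+* B) (J : Ideal B) : Subring (A × B) where
  carrier := {p | ∃ a, ∃ j ∈ J, p = (a, f a + j)}
  zero_mem' := ⟨0, 0, J.zero_mem, by ext <;> simp⟩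
  one_mem' := ⟨1, 0, J.zero_mem, by ext <;> simp⟩
  add_mem' := by
    rintro _ _ ⟨a, j, hj, rfl⟩ ⟨a', j', hj', rfl⟩
    exact ⟨a + a', j + j', J.add_mem hj hj', by simp [Prod.ext_iff]; ring⟩
  neg_mem' := by
    rintro _ ⟨a, j, hj, rfl⟩
    exact ⟨-a, -j, J.neg_mem hj, by simp [Prod.ext_iff]; ring⟩
  mul_mem' := by
    rintro _ _ ⟨a, j, hj, rfl⟩ ⟨a', j', hj', rfl⟩
    exact ⟨a * a', f a * j' + j * f a' + j * j',
      J.add_mem (J.add_mem (J.mul_mem_left _ hj') (J.mul_mem_right _ hj)) (J.mul_mem_right _ hj),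
      by simp [Prod.ext_iff]; ring⟩

/-- The set of zero-divisors of a ring. -/
def zdSet (R : Type*) [CommRing R] : Set R := {a | ∃ b, b ≠ 0 ∧ a * b = 0}

/-- The content ideal of a polynomial: the ideal generated by its coefficients. -/
def contentIdeal {R : Type*} [CommRing R] (p : Polynomial R) : Ideal R :=
  Ideal.span (Set.range p.coeff)

/-- A polynomial is Gaussian if `c(ph) = c(p) c(h)` for every polynomial `h`. -/
def IsGaussianPoly {R : Type*} [CommRing R] (p : Polynomial R) : Prop :=
  ∀ h : Polynomial R, contentIdeal (p * h) = contentIdeal p * contentIdeal h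

/-- A Gaussian ring. -/
def IsGaussianRing (R : Type*) [CommRing R] : Prop :=
  ∀ p q : Polynomial R, contentIdeal (p * q) = contentIdeal p * contentIdeal q

/-- A Prüfer ring: every finitely generated regular ideal is invertible
(in the total ring of quotients). -/
def IsPruferRing (R : Type*) [CommRing R] : Prop :=
  ∀ I : Ideal R, I.FG → (∃ r ∈ I, r ∈ nonZeroDivisors R) →
    ∃ T : FractionalIdeal (nonZeroDivisors R) (FractionRing R),
      (I : FractionalIdeal (nonZeroDivisors R) (FractionRing R)) * T = 1

/-- In a local Prüfer ring, if `a` is regular and `(a, x)` is a regular ideal, then `(a)` and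
`(x)` are comparable; and if `x = ak` with `k` a non-unit, then `a + x` is regular. -/
theorem comparable_of_local_prufer [IsLocalRing A] (hP : IsPruferRing A) (a x : A)
    (ha : a ∈ nonZeroDivisors A)
    (hax : ∃ r ∈ Ideal.span ({a, x} : Set A), r ∈ nonZeroDivisors A) :
    (Ideal.span ({a} : Set A) ≤ Ideal.span ({x} : Set A) ∨
      Ideal.span ({x} : Set A) ≤ Ideal.span ({a} : Set A)) ∧
    ∀ k : A, ¬ IsUnit k → x = a * k → a + x ∈ nonZeroDivisors A := by
  classical
  constructor
  · -- comparability
    obtain ⟨T, hT⟩ := hP (Ideal.span {a, x}) (Submodule.fg_span (Set.toFinite _)) hax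
    set K := FractionRing A with hK
    set φ := algebraMap A K with hφ
    have hinj : Function.Injective φ := IsFractionRing.injective A K
    have h1 : (1 : K) ∈
        ((Ideal.span {a, x} : Ideal A) : FractionalIdeal (nonZeroDivisors A) K) * T := by
      rw [hT]; exact FractionalIdeal.one_mem_one _
    -- every element of the product is of the form φ a * t + φ x * s with t,s ∈ T
    have key : ∃ t ∈ T, ∃ s ∈ T, (1 : K) = φ a * t + φ x * s := by
      refine FractionalIdeal.mul_induction_on h1 ?_ ?_
      · intro m hm n hn
        obtain ⟨m', hm', rfl⟩ := (FractionalIdeal.mem_coeIdeal _).mp hm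
        obtain ⟨c, d, hcd⟩ := Ideal.mem_span_pair.mp hm'
        refine ⟨c • n, Submodule.smul_mem _ c hn, d • n, Submodule.smul_mem _ d hn, ?_⟩
        rw [Algebra.smul_def, Algebra.smul_def, ← hcd]
        push_cast
        ring
      · rintro y z ⟨t, ht, s, hs, hy⟩ ⟨t', ht', s', hs', hz⟩
        exact ⟨t + t', Submodule.add_mem _ ht ht', s + s', Submodule.add_mem _ hs hs',
          by rw [hy, hz]; ring⟩
    obtain ⟨t, ht, s, hs, hts⟩ := key
    -- products of elements of I and T are in A
    have hmem : ∀ y : A, y ∈ Ideal.span ({a, x} : Set A) → ∀ u : K, u ∈ T →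
        ∃ c : A, φ c = φ y * u := by
      intro y hy u hu
      have : φ y * u ∈ (1 : FractionalIdeal (nonZeroDivisors A) K) := by
        rw [← hT]
        exact FractionalIdeal.mul_mem_mul (FractionalIdeal.mem_coeIdeal_of_mem _ hy) hu
      obtain ⟨c, hc⟩ := (FractionalIdeal.mem_one_iff _).mp this
      exact ⟨c, hc⟩
    have haI : a ∈ Ideal.span ({a, x} : Set A) :=
      Ideal.subset_span (by simp)
    have hxI : x ∈ Ideal.span ({a, x} : Set A) :=
      Ideal.subset_span (by simp)
    obtain ⟨p, hp⟩ := hmem a haI t ht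
    obtain ⟨q, hq⟩ := hmem x hxI s hs
    have hpq : p + q = 1 := by
      apply hinj
      rw [map_add, map_one, hp, hq, ← hts]
    rcases IsLocalRing.isUnit_or_isUnit_of_add_one hpq with hu | hu
    · -- p = φ⁻¹(φ a * t) is a unit : x ∈ (a)
      right
      rw [Ideal.span_singleton_le_span_singleton]
      obtain ⟨c, hc⟩ := hmem x hxI t ht
      have heq : φ (x * p) = φ (a * c) := by
        rw [map_mul, map_mul, hp, hc]; ring
      have hxp : x * p = a * c := hinj heq
      obtain ⟨u, rfl⟩ := hu
      refine ⟨c * ↑u⁻¹, ?_⟩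
      have : x * ↑u * ↑u⁻¹ = a * c * ↑u⁻¹ := by rw [hxp]
      calc x = x * (↑u * ↑u⁻¹) := by simp
        _ = a * (c * ↑u⁻¹) := by rw [← mul_assoc, this]; ring
    · -- q is a unit : a ∈ (x)
      left
      rw [Ideal.span_singleton_le_span_singleton]
      obtain ⟨d, hd⟩ := hmem a haI s hs
      have heq : φ (a * q) = φ (x * d) := by
        rw [map_mul, map_mul, hq, hd]; ring
      have haq : a * q = x * d := hinj heq
      obtain ⟨u, rfl⟩ := hu
      refine ⟨d * ↑u⁻¹, ?_⟩
      have : a * ↑u * ↑u⁻¹ = x * d * ↑u⁻¹ := by rw [haq]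
      calc a = a * (↑u * ↑u⁻¹) := by simp
        _ = x * (d * ↑u⁻¹) := by rw [← mul_assoc, this]; ring
  · intro k hk hxk
    subst hxk
    have h1k : IsUnit (1 + k) := by
      by_contra h
      rcases IsLocalRing.isUnit_or_isUnit_of_add_one (a := 1 + k) (b := -k) (by ring) with
        h' | h'
      · exact h h'
      · exact hk (by simpa using h'.neg)
    have heq : a + a * k = a * (1 + k) := by ring
    rw [heq]
    exact mul_mem ha h1k.mem_nonZeroDivisors
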